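/- Let b̃ : ℝ² → ℂ be smooth and compactly supported, and let C₀, C₁ > 0. Then there is a constant C (depending only on b̃, C₀, C₁) with the following property: for every real λ ≥ 1 and every function a : (0, ∞) → ℂ that is measurable on (0, 1/λ], continuously differentiable on [1/λ, ∞), and satisfies |a(r)| ≤ C₀ λ^{1/2} for 0 < r ≤ 1/λ, |a(r)| ≤ C₀ r^{-1/2} for r ≥ 1/λ, and |a'(r)| ≤ C₁ r^{-3/2} for r ≥ 1/λ, one has |λ^{1/2} ∬_{ℝ²} b̃(s, r) a(|r|) e^{iλ|r|} ds dr| ≤ C. -/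

import Mathlib

open Real MeasureTheory Set

lemma osc_half (C₀ C₁ M₀ M₁ T : ℝ) (hM₀ : 0 ≤ M₀) (hM₁ : 0 ≤ M₁)
    (hC₀ : 0 ≤ C₀) (hC₁ : 0 ≤ C₁) (hT : 1 ≤ T)
    (lam : ℝ) (hlam : 1 ≤ lam)
    (a : ℝ → ℂ) (ham : AEMeasurable a (volume.restrict (Set.Ioc 0 (1/lam))))
    (hca : ContDiffOn ℝ 1 a (Set.Ici (1/lam)))
    (ha1 : ∀ r : ℝ, 0 < r → r ≤ 1/lam → ‖a r‖ ≤ C₀ * lam ^ ((1:ℝ)/2))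
    (ha2 : ∀ r : ℝ, 1/lam ≤ r → ‖a r‖ ≤ C₀ * r ^ (-(1:ℝ)/2))
    (ha3 : ∀ r : ℝ, 1/lam ≤ r → ‖derivWithin a (Set.Ici (1/lam)) r‖ ≤ C₁ * r ^ (-(3:ℝ)/2))
    (g : ℝ → ℂ) (hg : ContDiff ℝ 1 g) (hgM0 : ∀ r, ‖g r‖ ≤ M₀) (hgM1 : ∀ r, ‖deriv g r‖ ≤ M₁)
    (hgz : ∀ r : ℝ, T ≤ r → g r = 0) :
    ‖∫ r in Set.Ioi (0:ℝ), g r * a r * Complex.exp (Complex.I * lam * r)‖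
      ≤ (2*M₀*C₀ + 2*M₁*C₀*T + 2*M₀*C₁) * lam ^ (-(1:ℝ)/2) := by
  have hlam0 : (0:ℝ) < lam := lt_of_lt_of_le one_pos hlam
  set c : ℝ := 1/lam with hc_def
  have hc : 0 < c := by positivity
  have hc1 : c ≤ 1 := by
    rw [hc_def, div_le_one hlam0]; exact hlam
  have hcT : c ≤ T := hc1.trans hT
  -- exponential
  set e : ℝ → ℂ := fun r => Complex.exp (Complex.I * lam * r) with he_def
  have he : Continuous e := by
    apply Complex.continuous_exp.comp
    exact continuous_const.mul Complex.continuous_ofReal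
  have hnorme : ∀ r : ℝ, ‖e r‖ = 1 := by
    intro r
    rw [he_def]
    simp [Complex.norm_exp]
  have hIlam : (Complex.I * lam) ≠ 0 := by
    simp [Complex.ext_iff, Complex.I_ne_zero, ne_of_gt hlam0]
  set φ : ℝ → ℂ := fun r => (Complex.I * lam)⁻¹ * e r with hφ_def
  have hnormφ : ∀ r : ℝ, ‖φ r‖ = 1/lam := by
    intro r
    rw [hφ_def]
    simp only [norm_mul, hnorme, mul_one, norm_inv]
    simp [ Complex.normSq_mul, Complex.normSq_I, abs_of_pos hlam0,
      Complex.normSq_ofReal]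
  -- the integrand
  set f : ℝ → ℂ := fun r => g r * a r * e r with hf_def
  have hconta : ContinuousOn a (Set.Ici c) := hca.continuousOn
  have hconta' : ContinuousOn (derivWithin a (Set.Ici c)) (Set.Ici c) :=
    hca.continuousOn_derivWithin (uniqueDiffOn_Ici c) le_rfl
  -- integrability on (0, c]
  have hbd1 : ∀ r ∈ Set.Ioc (0:ℝ) c, ‖f r‖ ≤ M₀ * (C₀ * lam ^ ((1:ℝ)/2)) := by
    intro r hr
    rw [hf_def]
    simp only [norm_mul, hnorme, mul_one]
    exact mul_le_mul (hgM0 r) (ha1 r hr.1 hr.2) (norm_nonneg _) hM₀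
  have hfm1 : AEStronglyMeasurable f (volume.restrict (Set.Ioc (0:ℝ) c)) := by
    apply AEMeasurable.aestronglyMeasurable
    exact ((hg.continuous.aemeasurable.mono_measure Measure.restrict_le_self).mul ham).mul
      (he.aemeasurable.mono_measure Measure.restrict_le_self)
  have Int1 : IntegrableOn f (Set.Ioc (0:ℝ) c) := by
    refine ⟨hfm1, ?_⟩
    apply MeasureTheory.HasFiniteIntegral.restrict_of_bounded
      (C := M₀ * (C₀ * lam ^ ((1:ℝ)/2))) (by simp [measure_Ioc_lt_top])
    exact (ae_restrict_iff' measurableSet_Ioc).2 (Filter.Eventually.of_forall hbd1)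
  -- integrability on (c, ∞)
  have hcontf : ContinuousOn f (Set.Icc c T) := by
    apply ContinuousOn.mul
    apply ContinuousOn.mul hg.continuous.continuousOn
    · exact hconta.mono Set.Icc_subset_Ici_self
    · exact he.continuousOn
  have hzero : Set.EqOn f 0 (Set.Ioi T) := by
    intro r hr
    simp [hf_def, hgz r (le_of_lt hr)]
  have Int2T : IntegrableOn f (Set.Ioc c T) :=
    (hcontf.integrableOn_Icc).mono_set Set.Ioc_subset_Icc_self
  have Int2 : IntegrableOn f (Set.Ioi c) := by
    rw [← Set.Ioc_union_Ioi_eq_Ioi hcT]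
    exact Int2T.union ((integrableOn_zero).congr_fun hzero.symm measurableSet_Ioi)
  -- splitting
  have hsplit : ∫ r in Set.Ioi (0:ℝ), f r
      = (∫ r in Set.Ioc (0:ℝ) c, f r) + ∫ r in Set.Ioi c, f r := by
    rw [← MeasureTheory.setIntegral_union (Set.Ioc_disjoint_Ioi le_rfl) measurableSet_Ioi
      Int1 Int2, Set.Ioc_union_Ioi_eq_Ioi (le_of_lt hc)]
  -- first part bound
  have hP1 : ‖∫ r in Set.Ioc (0:ℝ) c, f r‖ ≤ M₀ * C₀ * lam ^ (-(1:ℝ)/2) := by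
    have := (MeasureTheory.norm_setIntegral_le_of_norm_le_const_ae'
      (by simp [measure_Ioc_lt_top] : volume (Set.Ioc (0:ℝ) c) < ⊤)
      (Filter.Eventually.of_forall hbd1) : ‖∫ r in Set.Ioc (0:ℝ) c, f r‖
        ≤ M₀ * (C₀ * lam ^ ((1:ℝ)/2)) * (volume (Set.Ioc (0:ℝ) c)).toReal)
    have hvol : (volume (Set.Ioc (0:ℝ) c)).toReal = c := by
      simp [Real.volume_Ioc, le_of_lt hc]
    unfold Measure.real at this; rw [hvol] at this
    refine this.trans (le_of_eq ?_)
    have hx : lam ^ ((1:ℝ)/2) * c = lam ^ (-(1:ℝ)/2) := by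
      rw [hc_def, show (1:ℝ)/lam = lam ^ (-1:ℝ) from by rw [Real.rpow_neg_one, one_div],
        ← Real.rpow_add hlam0]
      norm_num
    calc M₀ * (C₀ * lam ^ ((1:ℝ)/2)) * c = M₀ * C₀ * (lam ^ ((1:ℝ)/2) * c) := by ring
      _ = M₀ * C₀ * lam ^ (-(1:ℝ)/2) := by rw [hx]
  -- second piece : reduce to interval integral
  have hIoiT : ∫ r in Set.Ioi T, f r = 0 := by
    rw [MeasureTheory.setIntegral_congr_fun measurableSet_Ioi hzero]
    simp
  have hP2split : ∫ r in Set.Ioi c, f r = ∫ r in c..T, f r := by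
    rw [← Set.Ioc_union_Ioi_eq_Ioi hcT,
      MeasureTheory.setIntegral_union (Set.Ioc_disjoint_Ioi le_rfl) measurableSet_Ioi Int2T
        ((integrableOn_zero).congr_fun hzero.symm measurableSet_Ioi),
      hIoiT, add_zero, intervalIntegral.integral_of_le hcT]
  -- FTC setup
  set a' : ℝ → ℂ := derivWithin a (Set.Ici c) with ha'_def
  set F : ℝ → ℂ := fun r => g r * a r * φ r with hF_def
  set stuff : ℝ → ℂ := fun x => (deriv g x * a x + g x * a' x) * φ x with hstuff_def
  set f' : ℝ → ℂ := fun x => stuff x + f x with hf'_def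
  have hcontφ : Continuous φ := continuous_const.mul he
  have hcontF : ContinuousOn F (Set.Icc c T) :=
    (hg.continuous.continuousOn.mul (hconta.mono Set.Icc_subset_Ici_self)).mul
      hcontφ.continuousOn
  have hderivF : ∀ x ∈ Set.Ioo c T, HasDerivAt F (f' x) x := by
    intro x hx
    have hax : HasDerivAt a (a' x) x := by
      have h1 : HasDerivWithinAt a (a' x) (Set.Ici c) x :=
        ((hca.differentiableOn one_ne_zero) x (le_of_lt hx.1)).hasDerivWithinAt
      exact h1.hasDerivAt (Ici_mem_nhds hx.1)
    have hgx : HasDerivAt g (deriv g x) x := (hg.differentiable one_ne_zero x).hasDerivAt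
    have hex : HasDerivAt e (Complex.I * lam * e x) x := by
      have h2 : HasDerivAt (fun z : ℂ => Complex.exp (Complex.I * lam * z))
          (Complex.I * lam * Complex.exp (Complex.I * lam * x)) (x : ℂ) := by
        have h3 := ((hasDerivAt_id ((x : ℝ) : ℂ)).const_mul (Complex.I * (lam:ℂ))).cexp
        simpa [mul_comm] using h3
      exact h2.comp_ofReal
    have hφx : HasDerivAt φ (e x) x := by
      have h4 := hex.const_mul ((Complex.I * (lam:ℂ))⁻¹)
      have h5 : (Complex.I * (lam:ℂ))⁻¹ * (Complex.I * lam * e x) = e x := by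
        rw [← mul_assoc, inv_mul_cancel₀ hIlam, one_mul]
      rw [h5] at h4
      exact h4
    have h6 := (hgx.mul hax).mul hφx
    have h7 : deriv g x * a x * φ x + g x * a' x * φ x + g x * a x * e x = f' x := by
      rw [hf'_def]; simp only [hstuff_def, hf_def]; ring
    rw [← h7]
    exact h6.congr_deriv (by simp only [Pi.mul_apply]; ring)
  have hcontstuff : ContinuousOn stuff (Set.Icc c T) := by
    apply ContinuousOn.mul _ hcontφ.continuousOn
    apply ContinuousOn.add
    · exact (hg.continuous_deriv le_rfl).continuousOn.mul
        (hconta.mono Set.Icc_subset_Ici_self)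
    · exact hg.continuous.continuousOn.mul (hconta'.mono Set.Icc_subset_Ici_self)
  have hint_stuff : IntervalIntegrable stuff volume c T :=
    hcontstuff.intervalIntegrable_of_Icc hcT
  have hint_f : IntervalIntegrable f volume c T := hcontf.intervalIntegrable_of_Icc hcT
  have hint_f' : IntervalIntegrable f' volume c T := hint_stuff.add hint_f
  have hFTC : ∫ y in c..T, f' y = F T - F c :=
    intervalIntegral.integral_eq_sub_of_hasDeriv_right_of_le hcT hcontF
      (fun x hx => (hderivF x hx).hasDerivWithinAt) hint_f'
  have hFT : F T = 0 := by rw [hF_def]; simp [hgz T le_rfl]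
  have hkey : ∫ y in c..T, f y = (F T - F c) - ∫ y in c..T, stuff y := by
    rw [← hFTC, ← intervalIntegral.integral_sub hint_f' hint_stuff]
    apply intervalIntegral.integral_congr
    intro y _
    rw [hf'_def]
    ring
  -- bound on F c
  have hlamhalf : lam ^ ((1:ℝ)/2) * c = lam ^ (-(1:ℝ)/2) := by
    rw [hc_def, show (1:ℝ)/lam = lam ^ (-1:ℝ) from by rw [Real.rpow_neg_one, one_div],
      ← Real.rpow_add hlam0]
    norm_num
  have hFc : ‖F c‖ ≤ M₀ * C₀ * lam ^ (-(1:ℝ)/2) := by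
    rw [hF_def]
    simp only [norm_mul, hnormφ]
    calc ‖g c‖ * ‖a c‖ * (1/lam) ≤ M₀ * (C₀ * lam ^ ((1:ℝ)/2)) * (1/lam) := by
          apply mul_le_mul_of_nonneg_right _ (by positivity)
          exact mul_le_mul (hgM0 c) (ha1 c hc le_rfl) (norm_nonneg _) hM₀
      _ = M₀ * C₀ * (lam ^ ((1:ℝ)/2) * (1/lam)) := by ring
      _ = M₀ * C₀ * lam ^ (-(1:ℝ)/2) := by rw [← hc_def, hlamhalf]
  -- bound on the stuff integral
  set ψ : ℝ → ℝ := fun x => M₁*C₀/lam * x ^ (-(1:ℝ)/2) + M₀*C₁/lam * x ^ (-(3:ℝ)/2) with hψ_def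
  have hpow1 : IntervalIntegrable (fun x : ℝ => x ^ (-(1:ℝ)/2)) volume c T := by
    apply ContinuousOn.intervalIntegrable_of_Icc hcT
    exact ContinuousOn.rpow_const continuousOn_id
      (fun x hx => Or.inl (ne_of_gt (lt_of_lt_of_le hc hx.1)))
  have hpow2 : IntervalIntegrable (fun x : ℝ => x ^ (-(3:ℝ)/2)) volume c T := by
    apply ContinuousOn.intervalIntegrable_of_Icc hcT
    exact ContinuousOn.rpow_const continuousOn_id
      (fun x hx => Or.inl (ne_of_gt (lt_of_lt_of_le hc hx.1)))
  have hintψ : IntervalIntegrable ψ volume c T :=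
    (hpow1.const_mul _).add (hpow2.const_mul _)
  have hstuffle : ∀ᵐ t ∂volume.restrict (Set.uIoc c T), ‖stuff t‖ ≤ ψ t := by
    apply ae_restrict_of_forall_mem measurableSet_uIoc
    intro x hx
    rw [Set.uIoc_of_le hcT] at hx
    have hcx : c ≤ x := le_of_lt hx.1
    have hx0 : (0:ℝ) < x := lt_of_lt_of_le hc hcx
    rw [hstuff_def]
    simp only [norm_mul, hnormφ]
    have h8 : ‖deriv g x * a x + g x * a' x‖ ≤ M₁ * (C₀ * x ^ (-(1:ℝ)/2))
        + M₀ * (C₁ * x ^ (-(3:ℝ)/2)) := by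
      refine (norm_add_le _ _).trans (add_le_add ?_ ?_)
      · rw [norm_mul]
        exact mul_le_mul (hgM1 x) (ha2 x hcx) (norm_nonneg _) hM₁
      · rw [norm_mul]
        exact mul_le_mul (hgM0 x) (ha3 x hcx) (norm_nonneg _) hM₀
    calc ‖deriv g x * a x + g x * a' x‖ * (1/lam)
        ≤ (M₁ * (C₀ * x ^ (-(1:ℝ)/2)) + M₀ * (C₁ * x ^ (-(3:ℝ)/2))) * (1/lam) :=
          mul_le_mul_of_nonneg_right h8 (by positivity)
      _ = ψ x := by rw [hψ_def]; ring
  have hI1 : ∫ x in c..T, x ^ (-(1:ℝ)/2) ≤ 2 * T := by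
    rw [integral_rpow (Or.inl (by norm_num))]
    have h1 : T ^ (-(1:ℝ)/2 + 1) ≤ T := by
      rw [show (-(1:ℝ)/2 + 1) = 1/2 by norm_num]
      calc T ^ ((1:ℝ)/2) ≤ T ^ (1:ℝ) :=
            Real.rpow_le_rpow_of_exponent_le hT (by norm_num)
        _ = T := Real.rpow_one T
    have h2 : (0:ℝ) ≤ c ^ (-(1:ℝ)/2 + 1) := Real.rpow_nonneg (le_of_lt hc) _
    rw [div_le_iff₀ (by norm_num : (0:ℝ) < -(1:ℝ)/2 + 1)]
    nlinarith [hT]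
  have hcpow : c ^ (-(1:ℝ)/2) = lam ^ ((1:ℝ)/2) := by
    rw [hc_def, show (1:ℝ)/lam = lam ^ (-1:ℝ) from by rw [Real.rpow_neg_one, one_div],
      ← Real.rpow_mul (le_of_lt hlam0)]
    norm_num
  have hI2 : ∫ x in c..T, x ^ (-(3:ℝ)/2) ≤ 2 * lam ^ ((1:ℝ)/2) := by
    have h0T : (0:ℝ) ∉ Set.uIcc c T := by
      rw [Set.uIcc_of_le hcT]
      intro h
      exact absurd h.1 (not_le.2 hc)
    rw [integral_rpow (Or.inr ⟨by norm_num, h0T⟩)]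
    have h1 : (0:ℝ) ≤ T ^ (-(3:ℝ)/2 + 1) := Real.rpow_nonneg (by linarith) _
    have h2 : c ^ (-(3:ℝ)/2 + 1) = lam ^ ((1:ℝ)/2) := by
      rw [show (-(3:ℝ)/2 + 1) = -(1:ℝ)/2 by norm_num, hcpow]
    rw [div_le_iff_of_neg (by norm_num : (-(3:ℝ)/2 + 1) < 0), h2]
    nlinarith [Real.rpow_nonneg (le_of_lt hlam0) ((1:ℝ)/2), h1]
  have hψint : ∫ x in c..T, ψ x ≤ M₁*C₀/lam * (2*T) + M₀*C₁/lam * (2 * lam ^ ((1:ℝ)/2)) := by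
    rw [hψ_def, intervalIntegral.integral_add (hpow1.const_mul _) (hpow2.const_mul _),
      intervalIntegral.integral_const_mul, intervalIntegral.integral_const_mul]
    have k1 : (0:ℝ) ≤ M₁*C₀/lam := by positivity
    have k2 : (0:ℝ) ≤ M₀*C₁/lam := by positivity
    exact add_le_add (mul_le_mul_of_nonneg_left hI1 k1) (mul_le_mul_of_nonneg_left hI2 k2)
  have hψnonneg : (0:ℝ) ≤ ∫ x in c..T, ψ x := by
    apply intervalIntegral.integral_nonneg hcT
    intro x hx
    have hx0 : (0:ℝ) ≤ x := le_trans (le_of_lt hc) hx.1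
    rw [hψ_def]
    have := Real.rpow_nonneg hx0 (-(1:ℝ)/2)
    have := Real.rpow_nonneg hx0 (-(3:ℝ)/2)
    positivity
  have hstuffbound : ‖∫ y in c..T, stuff y‖
      ≤ M₁*C₀/lam * (2*T) + M₀*C₁/lam * (2 * lam ^ ((1:ℝ)/2)) := by
    refine (intervalIntegral.norm_integral_le_abs_of_norm_le hstuffle hintψ).trans ?_
    rw [abs_of_nonneg hψnonneg]
    exact hψint
  -- convert the two lam-terms
  have hlaminv : 1/lam ≤ lam ^ (-(1:ℝ)/2) := by
    rw [show (1:ℝ)/lam = lam ^ (-1:ℝ) from by rw [Real.rpow_neg_one, one_div]]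
    exact Real.rpow_le_rpow_of_exponent_le hlam (by norm_num)
  have hterm1 : M₁*C₀/lam * (2*T) ≤ 2*M₁*C₀*T * lam ^ (-(1:ℝ)/2) := by
    have : M₁*C₀/lam * (2*T) = (2*M₁*C₀*T) * (1/lam) := by ring
    rw [this]
    apply mul_le_mul_of_nonneg_left hlaminv (by positivity)
  have hterm2 : M₀*C₁/lam * (2 * lam ^ ((1:ℝ)/2)) ≤ 2*M₀*C₁ * lam ^ (-(1:ℝ)/2) := by
    have : M₀*C₁/lam * (2 * lam ^ ((1:ℝ)/2)) = (2*M₀*C₁) * (lam ^ ((1:ℝ)/2) * (1/lam)) := by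
      ring
    rw [this, ← hc_def, hlamhalf]
  -- assemble
  have hP2 : ‖∫ r in Set.Ioi c, f r‖
      ≤ M₀*C₀ * lam ^ (-(1:ℝ)/2) + (2*M₁*C₀*T * lam ^ (-(1:ℝ)/2) + 2*M₀*C₁ * lam ^ (-(1:ℝ)/2)) := by
    rw [hP2split, hkey, hFT, zero_sub]
    refine (norm_sub_le _ _).trans ?_
    rw [norm_neg]
    exact add_le_add hFc (hstuffbound.trans (add_le_add hterm1 hterm2))
  calc ‖∫ r in Set.Ioi (0:ℝ), f r‖
      ≤ ‖∫ r in Set.Ioc (0:ℝ) c, f r‖ + ‖∫ r in Set.Ioi c, f r‖ := by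
        rw [hsplit]; exact norm_add_le _ _
    _ ≤ M₀ * C₀ * lam ^ (-(1:ℝ)/2)
        + (M₀*C₀ * lam ^ (-(1:ℝ)/2) + (2*M₁*C₀*T * lam ^ (-(1:ℝ)/2) + 2*M₀*C₁ * lam ^ (-(1:ℝ)/2))) :=
        add_le_add hP1 hP2
    _ = (2*M₀*C₀ + 2*M₁*C₀*T + 2*M₀*C₁) * lam ^ (-(1:ℝ)/2) := by ring

lemma osc_line (C₀ C₁ M₀ M₁ T : ℝ) (hM₀ : 0 ≤ M₀) (hM₁ : 0 ≤ M₁)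
    (hC₀ : 0 ≤ C₀) (hC₁ : 0 ≤ C₁) (hT : 1 ≤ T)
    (lam : ℝ) (hlam : 1 ≤ lam)
    (a : ℝ → ℂ) (ham : AEMeasurable a (volume.restrict (Set.Ioc 0 (1/lam))))
    (hca : ContDiffOn ℝ 1 a (Set.Ici (1/lam)))
    (ha1 : ∀ r : ℝ, 0 < r → r ≤ 1/lam → ‖a r‖ ≤ C₀ * lam ^ ((1:ℝ)/2))
    (ha2 : ∀ r : ℝ, 1/lam ≤ r → ‖a r‖ ≤ C₀ * r ^ (-(1:ℝ)/2))
    (ha3 : ∀ r : ℝ, 1/lam ≤ r → ‖derivWithin a (Set.Ici (1/lam)) r‖ ≤ C₁ * r ^ (-(3:ℝ)/2))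
    (g : ℝ → ℂ) (hg : ContDiff ℝ 1 g) (hgM0 : ∀ r, ‖g r‖ ≤ M₀) (hgM1 : ∀ r, ‖deriv g r‖ ≤ M₁)
    (hgz : ∀ r : ℝ, T ≤ |r| → g r = 0) :
    ‖∫ r : ℝ, g r * a |r| * Complex.exp (Complex.I * lam * (|r| : ℝ))‖
      ≤ 2 * ((2*M₀*C₀ + 2*M₁*C₀*T + 2*M₀*C₁) * lam ^ (-(1:ℝ)/2)) := by
  have hlam0 : (0:ℝ) < lam := lt_of_lt_of_le one_pos hlam
  set c : ℝ := 1/lam with hc_def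
  have hc : 0 < c := by positivity
  set h : ℝ → ℂ := fun r => g r * a |r| * Complex.exp (Complex.I * lam * (|r| : ℝ)) with hh_def
  -- measurability of r ↦ a |r|
  have hA1 : AEMeasurable a (volume.restrict (Set.Ioi (0:ℝ))) := by
    rw [← Set.Ioc_union_Ioi_eq_Ioi (le_of_lt hc)]
    rw [aemeasurable_union_iff]
    refine ⟨ham, ?_⟩
    exact ((hca.continuousOn.mono Set.Ioi_subset_Ici_self).aemeasurable measurableSet_Ioi)
  have habs_pos : AEMeasurable (fun r => a |r|) (volume.restrict (Set.Ioi (0:ℝ))) := by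
    apply hA1.congr
    apply ae_restrict_of_forall_mem measurableSet_Ioi
    intro x hx
    show a x = a |x|
    rw [abs_of_pos hx]
  have hemb : MeasurableEmbedding (fun x : ℝ => -x) :=
    (Homeomorph.neg ℝ).isClosedEmbedding.measurableEmbedding
  have hmap : (volume.restrict (Set.Iio (0:ℝ))).map (fun x : ℝ => -x)
      = volume.restrict (Set.Ioi (0:ℝ)) := by
    have h1 := hemb.restrict_map (volume : Measure ℝ) (Set.Ioi (0:ℝ))
    have h2 : (fun x : ℝ => -x) ⁻¹' (Set.Ioi (0:ℝ)) = Set.Iio 0 := by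
      ext x; simp
    rw [h2, Measure.map_neg_eq_self (volume : Measure ℝ)] at h1
    exact h1.symm
  have habs_neg : AEMeasurable (fun r => a |r|) (volume.restrict (Set.Iio (0:ℝ))) := by
    have h3 : AEMeasurable (fun r => a |r|)
        ((volume.restrict (Set.Iio (0:ℝ))).map (fun x : ℝ => -x)) := by
      rw [hmap]; exact habs_pos
    have h4 := (hemb.aemeasurable_map_iff).1 h3
    have h5 : ((fun r => a |r|) ∘ fun x : ℝ => -x) = fun r => a |r| := by
      funext x; simp [Function.comp, abs_neg]
    rwa [h5] at h4
  have hvol_eq : (volume : Measure ℝ) = volume.restrict ({(0:ℝ)}ᶜ) := by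
    conv_lhs => rw [← Measure.restrict_add_restrict_compl
      (μ := (volume : Measure ℝ)) (measurableSet_singleton (0:ℝ))]
    rw [Measure.restrict_eq_zero.2 (by simp), zero_add]
  have hameas : AEMeasurable (fun r => a |r|) (volume : Measure ℝ) := by
    rw [hvol_eq, ← Set.Iio_union_Ioi, aemeasurable_union_iff]
    exact ⟨habs_neg, habs_pos⟩
  -- continuity facts
  have hexpabs : Continuous (fun r : ℝ => Complex.exp (Complex.I * lam * (|r| : ℝ))) := by
    apply Complex.continuous_exp.comp
    exact continuous_const.mul (Complex.continuous_ofReal.comp continuous_abs)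
  have hmeas_h : AEStronglyMeasurable h (volume : Measure ℝ) := by
    apply AEMeasurable.aestronglyMeasurable
    exact (hg.continuous.aemeasurable.mul hameas).mul hexpabs.aemeasurable
  -- global bound on a |r| for r ≠ 0
  have habound : ∀ r : ℝ, r ≠ 0 → ‖a |r|‖ ≤ C₀ * lam ^ ((1:ℝ)/2) := by
    intro r hr
    have habs : 0 < |r| := abs_pos.2 hr
    rcases le_or_gt |r| c with hle | hgt
    · exact ha1 _ habs hle
    · refine (ha2 _ (le_of_lt hgt)).trans ?_
      apply mul_le_mul_of_nonneg_left _ hC₀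
      have := Real.rpow_le_rpow_of_nonpos hc (le_of_lt hgt) (by norm_num : -(1:ℝ)/2 ≤ 0)
      refine this.trans (le_of_eq ?_)
      rw [hc_def, show (1:ℝ)/lam = lam ^ (-1:ℝ) from by rw [Real.rpow_neg_one, one_div],
        ← Real.rpow_mul (le_of_lt hlam0)]
      norm_num
  have h_ne : ∀ᵐ r : ℝ ∂(volume : Measure ℝ), r ≠ 0 := by
    have : (volume : Measure ℝ) {(0:ℝ)} = 0 := by simp
    have h6 := measure_eq_zero_iff_ae_notMem.1 this
    filter_upwards [h6] with x hx
    simpa using hx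
  -- integrability of h
  have hInt : Integrable h (volume : Measure ℝ) := by
    apply Integrable.mono'
      (g := fun r => Set.indicator (Set.Icc (-T) T) (fun _ => M₀ * (C₀ * lam ^ ((1:ℝ)/2))) r)
    · rw [integrable_indicator_iff measurableSet_Icc]
      exact integrableOn_const (by simp)
    · exact hmeas_h
    · filter_upwards [h_ne] with r hr
      rcases le_or_gt |r| T with hle | hgt
      · have hmem : r ∈ Set.Icc (-T) T := abs_le.1 hle
        have hexp1 : ‖Complex.exp (Complex.I * lam * ((|r|:ℝ) : ℂ))‖ = 1 := by
          simp [Complex.norm_exp]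
        rw [Set.indicator_of_mem hmem, hh_def]
        simp only [norm_mul, hexp1, mul_one]
        exact mul_le_mul (hgM0 r) (habound r hr) (norm_nonneg _) hM₀
      · have hz : h r = 0 := by
          rw [hh_def]
          simp [hgz r (le_of_lt hgt)]
        rw [hz, norm_zero]
        exact Set.indicator_nonneg (fun _ _ => by positivity) r
  -- split the line
  have hsplit : ∫ r : ℝ, h r = (∫ r in Set.Iic (0:ℝ), h r) + ∫ r in Set.Ioi (0:ℝ), h r :=
    (intervalIntegral.integral_Iic_add_Ioi hInt.integrableOn hInt.integrableOn).symm
  -- positive part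
  have hpos : ‖∫ r in Set.Ioi (0:ℝ), h r‖
      ≤ (2*M₀*C₀ + 2*M₁*C₀*T + 2*M₀*C₁) * lam ^ (-(1:ℝ)/2) := by
    have heq : ∫ r in Set.Ioi (0:ℝ), h r
        = ∫ r in Set.Ioi (0:ℝ), g r * a r * Complex.exp (Complex.I * lam * r) := by
      apply MeasureTheory.setIntegral_congr_fun measurableSet_Ioi
      intro x hx
      rw [hh_def]
      simp only
      rw [abs_of_pos hx]
    rw [heq]
    exact osc_half C₀ C₁ M₀ M₁ T hM₀ hM₁ hC₀ hC₁ hT lam hlam a ham hca ha1 ha2 ha3 g hg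
      hgM0 hgM1 (fun r hr => hgz r (le_trans hr (le_abs_self r)))
  -- negative part
  have hneg : ‖∫ r in Set.Iic (0:ℝ), h r‖
      ≤ (2*M₀*C₀ + 2*M₁*C₀*T + 2*M₀*C₁) * lam ^ (-(1:ℝ)/2) := by
    have hcomp := integral_comp_neg_Ioi (0:ℝ) h
    rw [neg_zero] at hcomp
    rw [← hcomp]
    have heq : ∫ r in Set.Ioi (0:ℝ), h (-r)
        = ∫ r in Set.Ioi (0:ℝ), g (-r) * a r * Complex.exp (Complex.I * lam * r) := by
      apply MeasureTheory.setIntegral_congr_fun measurableSet_Ioi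
      intro x hx
      rw [hh_def]
      simp only
      rw [abs_neg, abs_of_pos hx]
    rw [heq]
    have hgneg : ContDiff ℝ 1 (fun r : ℝ => g (-r)) := hg.comp (contDiff_id.neg)
    have hgnegd : ∀ r : ℝ, deriv (fun r : ℝ => g (-r)) r = -deriv g (-r) := fun r =>
      deriv_comp_neg g r
    apply osc_half C₀ C₁ M₀ M₁ T hM₀ hM₁ hC₀ hC₁ hT lam hlam a ham hca ha1 ha2 ha3
      (fun r => g (-r)) hgneg (fun r => hgM0 (-r))
    · intro r
      rw [hgnegd r, norm_neg]
      exact hgM1 (-r)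
    · intro r hr
      apply hgz
      rw [abs_neg]
      exact le_trans hr (le_abs_self r)
  calc ‖∫ r : ℝ, h r‖ ≤ ‖∫ r in Set.Iic (0:ℝ), h r‖ + ‖∫ r in Set.Ioi (0:ℝ), h r‖ := by
        rw [hsplit]; exact norm_add_le _ _
    _ ≤ _ := by
        rw [two_mul]
        exact add_le_add hneg hpos

lemma aemeas_abs (c : ℝ) (hc : 0 < c) (a : ℝ → ℂ)
    (ham : AEMeasurable a (volume.restrict (Set.Ioc 0 c)))
    (hcont : ContinuousOn a (Set.Ici c)) :
    AEMeasurable (fun r => a |r|) (volume : Measure ℝ) := by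
  have hA1 : AEMeasurable a (volume.restrict (Set.Ioi (0:ℝ))) := by
    rw [← Set.Ioc_union_Ioi_eq_Ioi (le_of_lt hc), aemeasurable_union_iff]
    exact ⟨ham, (hcont.mono Set.Ioi_subset_Ici_self).aemeasurable measurableSet_Ioi⟩
  have habs_pos : AEMeasurable (fun r => a |r|) (volume.restrict (Set.Ioi (0:ℝ))) := by
    apply hA1.congr
    apply ae_restrict_of_forall_mem measurableSet_Ioi
    intro x hx
    show a x = a |x|
    rw [abs_of_pos hx]
  have hemb : MeasurableEmbedding (fun x : ℝ => -x) :=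
    (Homeomorph.neg ℝ).isClosedEmbedding.measurableEmbedding
  have hmap : (volume.restrict (Set.Iio (0:ℝ))).map (fun x : ℝ => -x)
      = volume.restrict (Set.Ioi (0:ℝ)) := by
    have h1 := hemb.restrict_map (volume : Measure ℝ) (Set.Ioi (0:ℝ))
    have h2 : (fun x : ℝ => -x) ⁻¹' (Set.Ioi (0:ℝ)) = Set.Iio 0 := by ext x; simp
    rw [h2, Measure.map_neg_eq_self (volume : Measure ℝ)] at h1
    exact h1.symm
  have habs_neg : AEMeasurable (fun r => a |r|) (volume.restrict (Set.Iio (0:ℝ))) := by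
    have h3 : AEMeasurable (fun r => a |r|)
        ((volume.restrict (Set.Iio (0:ℝ))).map (fun x : ℝ => -x)) := by
      rw [hmap]; exact habs_pos
    have h4 := (hemb.aemeasurable_map_iff).1 h3
    have h5 : ((fun r => a |r|) ∘ fun x : ℝ => -x) = fun r => a |r| := by
      funext x; simp [Function.comp, abs_neg]
    rwa [h5] at h4
  have hvol_eq : (volume : Measure ℝ) = volume.restrict ({(0:ℝ)}ᶜ) := by
    conv_lhs => rw [← Measure.restrict_add_restrict_compl
      (μ := (volume : Measure ℝ)) (measurableSet_singleton (0:ℝ))]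
    rw [Measure.restrict_eq_zero.2 (by simp), zero_add]
  rw [hvol_eq, ← Set.Iio_union_Ioi, aemeasurable_union_iff]
  exact ⟨habs_neg, habs_pos⟩

/-- The oscillatory integral estimate for the local part of the smoothed spectral
projector: `λ^{1/2} ∬ b̃(s,r) a(|r|) e^{iλ|r|} ds dr = O(1)`, uniformly over amplitudes
`a` satisfying `|a(r)| ≤ C₀ λ^{1/2}` for `0 < r ≤ 1/λ`, `|a(r)| ≤ C₀ r^{-1/2}` and
`|a'(r)| ≤ C₁ r^{-3/2}` for `r ≥ 1/λ`. -/
theorem stmt_13 (btil : ℝ × ℝ → ℂ)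
    (hbtil : ContDiff ℝ (⊤ : ℕ∞) btil) (hbsupp : HasCompactSupport btil)
    (C₀ C₁ : ℝ) (hC₀ : 0 < C₀) (hC₁ : 0 < C₁) :
    ∃ C : ℝ, ∀ lam : ℝ, 1 ≤ lam →
      ∀ a : ℝ → ℂ,
        AEMeasurable a (volume.restrict (Set.Ioc 0 (1 / lam))) →
        ContDiffOn ℝ 1 a (Set.Ici (1 / lam)) →
        (∀ r : ℝ, 0 < r → r ≤ 1 / lam → ‖a r‖ ≤ C₀ * lam ^ ((1 : ℝ) / 2)) →
        (∀ r : ℝ, 1 / lam ≤ r → ‖a r‖ ≤ C₀ * r ^ (-(1 : ℝ) / 2)) →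
        (∀ r : ℝ, 1 / lam ≤ r →
          ‖derivWithin a (Set.Ici (1 / lam)) r‖ ≤ C₁ * r ^ (-(3 : ℝ) / 2)) →
        ‖((lam ^ ((1 : ℝ) / 2) : ℝ) : ℂ) *
            ∫ p : ℝ × ℝ, btil p * a |p.2| * Complex.exp (Complex.I * (lam : ℂ) * (|p.2| : ℝ))‖
          ≤ C := by
  -- bounds on btil and its derivative, and its support
  obtain ⟨M₀', hM₀'⟩ := hbsupp.exists_bound_of_continuous hbtil.continuous
  set M₀ : ℝ := max M₀' 0 with hM₀_def
  have hM₀ : (0:ℝ) ≤ M₀ := le_max_right _ _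
  have hbM₀ : ∀ p, ‖btil p‖ ≤ M₀ := fun p => (hM₀' p).trans (le_max_left _ _)
  obtain ⟨M₁', hM₁'⟩ := (hbsupp.fderiv ℝ).exists_bound_of_continuous
    (hbtil.continuous_fderiv (by simp))
  set M₁ : ℝ := max M₁' 0 with hM₁_def
  have hM₁ : (0:ℝ) ≤ M₁ := le_max_right _ _
  have hbM₁ : ∀ p, ‖fderiv ℝ btil p‖ ≤ M₁ := fun p => (hM₁' p).trans (le_max_left _ _)
  obtain ⟨R', hR'⟩ := hbsupp.isBounded.subset_closedBall (0 : ℝ × ℝ)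
  set T : ℝ := max R' 1 + 1 with hT_def
  have hT : (1:ℝ) ≤ T := by
    have : (0:ℝ) ≤ max R' 1 := le_trans zero_le_one (le_max_right _ _)
    linarith
  have hbz : ∀ p : ℝ × ℝ, T ≤ ‖p‖ → btil p = 0 := by
    intro p hp
    apply image_eq_zero_of_notMem_tsupport
    intro hmem
    have := hR' hmem
    rw [Metric.mem_closedBall, dist_zero_right] at this
    have h1 : R' ≤ max R' 1 := le_max_left _ _
    rw [hT_def] at hp
    linarith
  set D : ℝ := 2 * (2*M₀*C₀ + 2*M₁*C₀*T + 2*M₀*C₁) with hD_def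
  refine ⟨2 * T * D, ?_⟩
  intro lam hlam a ham hca ha1 ha2 ha3
  have hlam0 : (0:ℝ) < lam := lt_of_lt_of_le one_pos hlam
  have hc : (0:ℝ) < 1/lam := by positivity
  -- measurability of r ↦ a |r|
  have hameas : AEMeasurable (fun r => a |r|) (volume : Measure ℝ) :=
    aemeas_abs (1/lam) hc a ham hca.continuousOn
  -- global bound on a |r|
  have habound : ∀ r : ℝ, r ≠ 0 → ‖a |r|‖ ≤ C₀ * lam ^ ((1:ℝ)/2) := by
    intro r hr
    have habs : 0 < |r| := abs_pos.2 hr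
    rcases le_or_gt |r| (1/lam) with hle | hgt
    · exact ha1 _ habs hle
    · refine (ha2 _ (le_of_lt hgt)).trans ?_
      apply mul_le_mul_of_nonneg_left _ (le_of_lt hC₀)
      have := Real.rpow_le_rpow_of_nonpos hc (le_of_lt hgt) (by norm_num : -(1:ℝ)/2 ≤ 0)
      refine this.trans (le_of_eq ?_)
      rw [show (1:ℝ)/lam = lam ^ (-1:ℝ) from by rw [Real.rpow_neg_one, one_div],
        ← Real.rpow_mul (le_of_lt hlam0)]
      norm_num
  -- the 2D integrand
  set f2 : ℝ × ℝ → ℂ :=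
    fun p => btil p * a |p.2| * Complex.exp (Complex.I * lam * (|p.2| : ℝ)) with hf2_def
  set P : Measure (ℝ × ℝ) := (volume : Measure ℝ).prod (volume : Measure ℝ) with hP_def
  have hvolP : (volume : Measure (ℝ × ℝ)) = P := Measure.volume_eq_prod ℝ ℝ
  -- measurability of f2
  have hmeas_f2 : AEStronglyMeasurable f2 P := by
    apply AEMeasurable.aestronglyMeasurable
    have hsnd : AEMeasurable (fun p : ℝ × ℝ => a |p.2|) P :=
      hameas.comp_quasiMeasurePreserving Measure.quasiMeasurePreserving_snd
    have hexp : Continuous (fun p : ℝ × ℝ => Complex.exp (Complex.I * lam * (|p.2| : ℝ))) := by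
      apply Complex.continuous_exp.comp
      exact continuous_const.mul
        (Complex.continuous_ofReal.comp (continuous_abs.comp continuous_snd))
    exact (hbtil.continuous.aemeasurable.mul hsnd).mul hexp.aemeasurable
  -- a.e. p.2 ≠ 0
  have hne2 : ∀ᵐ p : ℝ × ℝ ∂P, p.2 ≠ 0 := by
    rw [ae_iff]
    have hset : {p : ℝ × ℝ | ¬ p.2 ≠ 0} = (Set.univ : Set ℝ) ×ˢ ({0} : Set ℝ) := by
      ext p
      simp only [Set.mem_setOf_eq, not_not, Set.mem_prod, Set.mem_univ, true_and,
        Set.mem_singleton_iff]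
    rw [hset, hP_def, Measure.prod_prod]
    simp
  -- integrability of f2
  have hIntf2 : Integrable f2 P := by
    apply Integrable.mono' (g := fun p => C₀ * lam ^ ((1:ℝ)/2) * ‖btil p‖)
    · rw [← hvolP]
      exact ((hbtil.continuous.integrable_of_hasCompactSupport hbsupp).norm).const_mul _
    · exact hmeas_f2
    · filter_upwards [hne2] with p hp
      have hexp1 : ‖Complex.exp (Complex.I * lam * ((|p.2|:ℝ) : ℂ))‖ = 1 := by
        simp [Complex.norm_exp]
      rw [hf2_def]
      simp only [norm_mul, hexp1, mul_one]
      rw [mul_comm (C₀ * lam ^ ((1:ℝ)/2)) (‖btil p‖)]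
      exact mul_le_mul_of_nonneg_left (habound p.2 hp) (norm_nonneg _)
  -- Fubini
  have hFub : (∫ p : ℝ × ℝ, f2 p) = ∫ s : ℝ, ∫ r : ℝ, f2 (s, r) := by
    rw [hvolP]
    exact MeasureTheory.integral_prod f2 hIntf2
  set F : ℝ → ℂ := fun s => ∫ r : ℝ, f2 (s, r) with hF_def
  -- pointwise bound on F
  have hFbound : ∀ s : ℝ, ‖F s‖ ≤ D * lam ^ (-(1:ℝ)/2) := by
    intro s
    have hgs : ContDiff ℝ 1 (fun r : ℝ => btil (s, r)) := by
      have h1 : ContDiff ℝ (⊤:ℕ∞) (fun r : ℝ => ((s, r) : ℝ × ℝ)) :=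
        contDiff_const.prodMk contDiff_id
      exact (hbtil.comp h1).of_le (mod_cast le_top)
    have hds : ∀ r : ℝ, HasDerivAt (fun r : ℝ => btil (s, r))
        (fderiv ℝ btil (s, r) ((0, 1) : ℝ × ℝ)) r := by
      intro r
      have h1 : HasDerivAt (fun r : ℝ => ((s, r) : ℝ × ℝ)) ((0, 1) : ℝ × ℝ) r :=
        (hasDerivAt_const r s).prodMk (hasDerivAt_id r)
      exact (((hbtil.differentiable (by simp)) (s, r)).hasFDerivAt).comp_hasDerivAt r h1
    have hgM1 : ∀ r : ℝ, ‖deriv (fun r : ℝ => btil (s, r)) r‖ ≤ M₁ := by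
      intro r
      rw [(hds r).deriv]
      have h2 := (fderiv ℝ btil (s, r)).le_opNorm ((0, 1) : ℝ × ℝ)
      have h3 : ‖((0, 1) : ℝ × ℝ)‖ = 1 := by
        simp [Prod.norm_def]
      rw [h3, mul_one] at h2
      exact h2.trans (hbM₁ (s, r))
    have hgz : ∀ r : ℝ, T ≤ |r| → btil (s, r) = 0 := by
      intro r hr
      apply hbz
      refine hr.trans ?_
      have := norm_snd_le ((s, r) : ℝ × ℝ)
      rwa [Real.norm_eq_abs] at this
    have := osc_line C₀ C₁ M₀ M₁ T hM₀ hM₁ hC₀.le hC₁.le hT lam hlam a ham hca ha1 ha2 ha3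
      (fun r => btil (s, r)) hgs (fun r => hbM₀ (s, r)) hgM1 hgz
    rw [hD_def, mul_assoc]
    exact this
  -- F vanishes outside [-T, T]
  have hFz : ∀ s : ℝ, s ∉ Set.Icc (-T) T → F s = 0 := by
    intro s hs
    have habs : T ≤ |s| := by
      rw [Set.mem_Icc, not_and_or] at hs
      rcases hs with hs | hs
      · push_neg at hs
        calc T ≤ -s := by linarith
          _ ≤ |s| := neg_le_abs s
      · push_neg at hs
        exact (le_of_lt hs).trans (le_abs_self s)
    have hz : ∀ r : ℝ, f2 (s, r) = 0 := by
      intro r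
      have : btil (s, r) = 0 := by
        apply hbz
        refine habs.trans ?_
        have := norm_fst_le ((s, r) : ℝ × ℝ)
        rwa [Real.norm_eq_abs] at this
      rw [hf2_def]
      simp [this]
    rw [hF_def]
    simp only [hz]
    simp
  have hFrestrict : ∫ s : ℝ, F s = ∫ s in Set.Icc (-T) T, F s :=
    (setIntegral_eq_integral_of_forall_compl_eq_zero (fun x hx => hFz x hx)).symm
  have hFnorm : ‖∫ s in Set.Icc (-T) T, F s‖
      ≤ D * lam ^ (-(1:ℝ)/2) * (volume (Set.Icc (-T) T)).toReal :=
    MeasureTheory.norm_setIntegral_le_of_norm_le_const_ae'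
      (by simp : volume (Set.Icc (-T) T) < ⊤)
      (Filter.Eventually.of_forall (fun x _ => hFbound x))
  have hvolIcc : (volume (Set.Icc (-T) T)).toReal = 2*T := by
    rw [Real.volume_Icc, ENNReal.toReal_ofReal (by linarith)]
    ring
  have hnormcast : ‖((lam ^ ((1:ℝ)/2) : ℝ) : ℂ)‖ = lam ^ ((1:ℝ)/2) := by
    rw [Complex.norm_real, Real.norm_eq_abs, abs_of_nonneg (Real.rpow_nonneg (le_of_lt hlam0) _)]
  have hprod : lam ^ ((1:ℝ)/2) * lam ^ (-(1:ℝ)/2) = 1 := by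
    rw [← Real.rpow_add hlam0]
    norm_num
  calc ‖((lam ^ ((1:ℝ)/2) : ℝ) : ℂ) * ∫ p : ℝ × ℝ, f2 p‖
      = lam ^ ((1:ℝ)/2) * ‖∫ p : ℝ × ℝ, f2 p‖ := by rw [norm_mul, hnormcast]
    _ ≤ lam ^ ((1:ℝ)/2) * (D * lam ^ (-(1:ℝ)/2) * (2*T)) := by
        apply mul_le_mul_of_nonneg_left _ (Real.rpow_nonneg (le_of_lt hlam0) _)
        rw [hFub, hFrestrict]
        refine hFnorm.trans (le_of_eq ?_)
        rw [hvolIcc]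
    _ = 2 * T * D := by
        have : lam ^ ((1:ℝ)/2) * (D * lam ^ (-(1:ℝ)/2) * (2*T))
            = 2 * T * D * (lam ^ ((1:ℝ)/2) * lam ^ (-(1:ℝ)/2)) := by ring
        rw [this, hprod, mul_one]
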